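/- arXiv:2408.06615 — 2 statements merged into one kernel-verified Lean document; each statement's English description precedes it below -/
import Mathlib

section
/- Let α ∈ (0,1). Let ν and ν_1, …, ν_N be probability measures on a measurable space, let w_1, …, w_N ≥ 0 with ∑_i w_i = 1, and set ν_mix = ∑_{i=1}^N w_i ν_i. Let Q be a measurable real-valued function with finite second moments under ν and under ν_mix, and let Q_{s,1}, …, Q_{s,N} be measurable real-valued functions with |Q − Q_{s,i}| and |Q_{s,i}| integrable with respect to each ν_i. Suppose both minima CVaR_α^ν[Q] = min_{t∈ℝ} ( t + (1−α)^{-1} E_ν[(Q−t)^+] ) and Ĉ_α = min_{t∈ℝ} ( t + (1−α)^{-1} ∑_{i=1}^N w_i E_{ν_i}[(Q_{s,i}−t)^+] ) are attained. Then |CVaR_α^ν[Q] − Ĉ_α| ≤ (1−α)^{-1} ( 2 (E_ν[Q²] + E_{ν_mix}[Q²])^{1/2} · tv(ν, ν_mix)^{1/2} + ∑_{i=1}^N w_i E_{ν_i}[|Q − Q_{s,i}|] ). -/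
open MeasureTheory
open scoped NNReal ENNReal

/-- Total variation distance between two measures:
`tv(μ, ν) = sup_{A measurable} |μ(A) − ν(A)|`. -/
noncomputable def tvDist {α : Type*} [MeasurableSpace α] (μ ν : Measure α) : ℝ :=
  ⨆ s : {s : Set α // MeasurableSet s}, |(μ s.1).toReal - (ν s.1).toReal|

lemma my_integral_cs {α : Type*} [MeasurableSpace α] (ξ : Measure α) (u v : α → ℝ)
    (hu : Integrable (fun x => u x ^ 2) ξ) (hv : Integrable (fun x => v x ^ 2) ξ)
    (huv : Integrable (fun x => |u x| * |v x|) ξ) :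
    ∫ x, |u x| * |v x| ∂ξ ≤ Real.sqrt (∫ x, u x ^ 2 ∂ξ) * Real.sqrt (∫ x, v x ^ 2 ∂ξ) := by
  set A := ∫ x, u x ^ 2 ∂ξ with hA
  set B := ∫ x, v x ^ 2 ∂ξ with hB
  have hA0 : 0 ≤ A := integral_nonneg fun x => sq_nonneg _
  have hB0 : 0 ≤ B := integral_nonneg fun x => sq_nonneg _
  have hzero : ∀ (w z : α → ℝ), Integrable (fun x => w x ^ 2) ξ →
      (∫ x, w x ^ 2 ∂ξ) = 0 → Integrable (fun x => |w x| * |z x|) ξ →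
      ∫ x, |w x| * |z x| ∂ξ ≤ 0 := by
    intro w z hw hw0 hwz
    have hwz0 : (fun x => w x ^ 2) =ᵐ[ξ] 0 := by
      exact (integral_eq_zero_iff_of_nonneg (fun x => sq_nonneg _) hw).1 hw0
    have : (fun x => |w x| * |z x|) =ᵐ[ξ] 0 := by
      filter_upwards [hwz0] with x hx
      have : w x = 0 := by
        have := hx
        simpa [pow_eq_zero_iff] using hx
      simp [this]
    rw [integral_congr_ae this]
    simp
  rcases eq_or_lt_of_le hA0 with hA0' | hApos
  · have := hzero u v hu hA0'.symm huv
    calc ∫ x, |u x| * |v x| ∂ξ ≤ 0 := this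
    _ ≤ _ := by positivity
  rcases eq_or_lt_of_le hB0 with hB0' | hBpos
  · have : ∫ x, |u x| * |v x| ∂ξ ≤ 0 := by
      have h' := hzero v u hv hB0'.symm (by simpa [mul_comm] using huv)
      calc ∫ x, |u x| * |v x| ∂ξ = ∫ x, |v x| * |u x| ∂ξ := by simp [mul_comm]
      _ ≤ 0 := h'
    calc ∫ x, |u x| * |v x| ∂ξ ≤ 0 := this
    _ ≤ _ := by positivity
  -- main case
  set c : ℝ := Real.sqrt B / Real.sqrt A with hc
  have hcpos : 0 < c := div_pos (Real.sqrt_pos.2 hBpos) (Real.sqrt_pos.2 hApos)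
  have key : ∀ x, |u x| * |v x| ≤ (c * u x ^ 2 + c⁻¹ * v x ^ 2) / 2 := by
    intro x
    have h2 := two_mul_le_add_sq (Real.sqrt c * |u x|) (|v x| / Real.sqrt c)
    have hsc : 0 < Real.sqrt c := Real.sqrt_pos.2 hcpos
    have hcc : Real.sqrt c * Real.sqrt c = c := Real.mul_self_sqrt hcpos.le
    have e1 : 2 * (Real.sqrt c * |u x|) * (|v x| / Real.sqrt c) = 2 * (|u x| * |v x|) := by
      field_simp
    have e2 : (Real.sqrt c * |u x|) ^ 2 = c * u x ^ 2 := by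
      rw [mul_pow, sq_abs, sq, hcc]
    have e3 : (|v x| / Real.sqrt c) ^ 2 = c⁻¹ * v x ^ 2 := by
      rw [div_pow, sq_abs, Real.sq_sqrt hcpos.le]
      rw [sq, div_eq_inv_mul]
    rw [e1, e2, e3] at h2
    linarith
  have hint : ∫ x, |u x| * |v x| ∂ξ ≤ ∫ x, (c * u x ^ 2 + c⁻¹ * v x ^ 2) / 2 ∂ξ := by
    refine integral_mono huv ?_ key
    exact (((hu.const_mul c).add (hv.const_mul c⁻¹)).div_const 2)
  have hval : ∫ x, (c * u x ^ 2 + c⁻¹ * v x ^ 2) / 2 ∂ξ = (c * A + c⁻¹ * B) / 2 := by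
    rw [integral_div, integral_add (hu.const_mul c) (hv.const_mul c⁻¹),
      integral_const_mul, integral_const_mul]
  have hfin : (c * A + c⁻¹ * B) / 2 = Real.sqrt A * Real.sqrt B := by
    have hsA : Real.sqrt A * Real.sqrt A = A := Real.mul_self_sqrt hA0
    have hsB : Real.sqrt B * Real.sqrt B = B := Real.mul_self_sqrt hB0
    have hsA0 : Real.sqrt A ≠ 0 := (Real.sqrt_pos.2 hApos).ne'
    have hsB0 : Real.sqrt B ≠ 0 := (Real.sqrt_pos.2 hBpos).ne'
    have hcA : c * Real.sqrt A = Real.sqrt B := by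
      rw [hc]
      field_simp
    field_simp [hc]
    linear_combination (-c ^ 2) * hsA - hsB + (c * Real.sqrt A - Real.sqrt B) * hcA
  rw [hval, hfin] at hint
  exact hint

open scoped NNReal ENNReal

lemma my_le_tvDist {α : Type*} [MeasurableSpace α] (μ ν : Measure α)
    [IsProbabilityMeasure μ] [IsProbabilityMeasure ν] {s : Set α} (hs : MeasurableSet s) :
    (μ s).toReal - (ν s).toReal ≤ tvDist μ ν := by
  have hbdd : BddAbove (Set.range fun s : {s : Set α // MeasurableSet s} =>
      |(μ s.1).toReal - (ν s.1).toReal|) := by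
    refine ⟨1, ?_⟩
    rintro x ⟨t, rfl⟩
    have h1 : (μ t.1).toReal ≤ 1 := by
      simpa using ENNReal.toReal_mono (by simp) (prob_le_one (μ := μ) (s := t.1))
    have h2 : (ν t.1).toReal ≤ 1 := by
      simpa using ENNReal.toReal_mono (by simp) (prob_le_one (μ := ν) (s := t.1))
    have h3 : (0:ℝ) ≤ (μ t.1).toReal := ENNReal.toReal_nonneg
    have h4 : (0:ℝ) ≤ (ν t.1).toReal := ENNReal.toReal_nonneg
    rw [abs_sub_le_iff]
    constructor <;> linarith
  calc (μ s).toReal - (ν s).toReal ≤ |(μ s).toReal - (ν s).toReal| := le_abs_self _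
  _ ≤ tvDist μ ν := le_ciSup hbdd (⟨s, hs⟩ : {s : Set α // MeasurableSet s})

lemma my_tv_core {α : Type*} [MeasurableSpace α] (ν μ : Measure α)
    [IsProbabilityMeasure ν] [IsProbabilityMeasure μ] (Q h : α → ℝ)
    (hQ2ν : Integrable (fun x => Q x ^ 2) ν) (hQ2μ : Integrable (fun x => Q x ^ 2) μ)
    (hhν : Integrable h ν) (hhμ : Integrable h μ)
    (hbound : ∀ x, |h x| ≤ |Q x|) :
    |(∫ x, h x ∂ν) - ∫ x, h x ∂μ| ≤
      2 * Real.sqrt ((∫ x, Q x ^ 2 ∂ν) + ∫ x, Q x ^ 2 ∂μ) * Real.sqrt (tvDist ν μ) := by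
  set ξ : Measure α := ν + μ with hξ
  have hacν : ν ≪ ξ := Measure.absolutelyContinuous_of_le (Measure.le_add_right le_rfl)
  have hacμ : μ ≪ ξ := Measure.absolutelyContinuous_of_le (Measure.le_add_left le_rfl)
  set p : α → ℝ≥0∞ := ν.rnDeriv ξ with hp
  set q : α → ℝ≥0∞ := μ.rnDeriv ξ with hq
  have hpq : ∀ᵐ x ∂ξ, p x + q x = 1 := by
    have h1 : (ν + μ).rnDeriv ξ =ᵐ[ξ] ν.rnDeriv ξ + μ.rnDeriv ξ := Measure.rnDeriv_add' ν μ ξ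
    have h2 : ξ.rnDeriv ξ =ᵐ[ξ] fun _ => 1 := Measure.rnDeriv_self ξ
    rw [← hξ] at h1
    filter_upwards [h1, h2] with x hx1 hx2
    have : p x + q x = (ν.rnDeriv ξ + μ.rnDeriv ξ) x := rfl
    rw [this, ← hx1, hx2]
  set d : α → ℝ := fun x => (p x).toReal - (q x).toReal with hd
  have hdmeas : Measurable d :=
    (Measure.measurable_rnDeriv ν ξ).ennreal_toReal.sub
      (Measure.measurable_rnDeriv μ ξ).ennreal_toReal
  have hfacts : ∀ᵐ x ∂ξ, (p x).toReal + (q x).toReal = 1 ∧ |d x| ≤ 1 := by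
    filter_upwards [hpq] with x hx
    have hpfin : p x ≠ ∞ := by
      intro hcon
      rw [hcon] at hx
      simp at hx
    have hqfin : q x ≠ ∞ := by
      intro hcon
      rw [hcon] at hx
      simp [add_comm] at hx
    have hsum : (p x).toReal + (q x).toReal = 1 := by
      rw [← ENNReal.toReal_add hpfin hqfin, hx]
      simp
    refine ⟨hsum, ?_⟩
    have h1 : (0:ℝ) ≤ (p x).toReal := ENNReal.toReal_nonneg
    have h2 : (0:ℝ) ≤ (q x).toReal := ENNReal.toReal_nonneg
    rw [hd, abs_sub_le_iff]
    constructor <;> linarith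
  have hd1 : ∀ᵐ x ∂ξ, |d x| ≤ 1 := by filter_upwards [hfacts] with x hx using hx.2
  -- transfer integrals
  have hIν : ∫ x, (p x).toReal • h x ∂ξ = ∫ x, h x ∂ν := integral_rnDeriv_smul hacν
  have hIμ : ∫ x, (q x).toReal • h x ∂ξ = ∫ x, h x ∂μ := integral_rnDeriv_smul hacμ
  have hintp : Integrable (fun x => (p x).toReal • h x) ξ :=
    (integrable_rnDeriv_smul_iff hacν).2 hhν
  have hintq : Integrable (fun x => (q x).toReal • h x) ξ :=
    (integrable_rnDeriv_smul_iff hacμ).2 hhμ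
  have hdiff : (∫ x, h x ∂ν) - ∫ x, h x ∂μ = ∫ x, d x * h x ∂ξ := by
    rw [← hIν, ← hIμ, ← integral_sub hintp hintq]
    congr 1
    funext x
    simp [hd, smul_eq_mul]
    ring
  -- integrabilities over ξ
  have hhξ : Integrable h ξ := hhν.add_measure hhμ
  have hQ2ξ : Integrable (fun x => Q x ^ 2) ξ := hQ2ν.add_measure hQ2μ
  have hh2ξ : Integrable (fun x => h x ^ 2) ξ := by
    refine hQ2ξ.mono' ((hhξ.aestronglyMeasurable.mul hhξ.aestronglyMeasurable).congr ?_)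
      (Filter.Eventually.of_forall fun x => ?_)
    · exact Filter.Eventually.of_forall fun x => (sq (h x)).symm
    · have := hbound x
      have h2 : |h x| ^ 2 ≤ |Q x| ^ 2 := by nlinarith [abs_nonneg (h x)]
      simpa [sq_abs, abs_pow, abs_of_nonneg (sq_nonneg (h x))] using h2
  have hd2ξ : Integrable (fun x => d x ^ 2) ξ := by
    refine (integrable_const (1:ℝ)).mono' (hdmeas.pow_const 2).aestronglyMeasurable ?_
    filter_upwards [hd1] with x hx
    have : d x ^ 2 ≤ 1 := by nlinarith [abs_nonneg (d x), sq_abs (d x)]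
    simpa [abs_of_nonneg (sq_nonneg (d x))] using this
  have hdabsξ : Integrable (fun x => |d x|) ξ := by
    refine (integrable_const (1:ℝ)).mono' hdmeas.abs.aestronglyMeasurable ?_
    filter_upwards [hd1] with x hx
    simpa using hx
  have hdh : Integrable (fun x => |d x| * |h x|) ξ := by
    refine hhξ.abs.mono' (hdmeas.abs.aestronglyMeasurable.mul hhξ.abs.aestronglyMeasurable) ?_
    filter_upwards [hd1] with x hx
    have h0 : 0 ≤ |d x| * |h x| := mul_nonneg (abs_nonneg _) (abs_nonneg _)
    rw [Real.norm_eq_abs, abs_of_nonneg h0]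
    calc |d x| * |h x| ≤ 1 * |h x| := by
          exact mul_le_mul_of_nonneg_right hx (abs_nonneg _)
    _ = |h x| := one_mul _
  -- main bound
  have habs : |∫ x, d x * h x ∂ξ| ≤ ∫ x, |d x| * |h x| ∂ξ := by
    simpa [Real.norm_eq_abs, abs_mul] using
      norm_integral_le_integral_norm (μ := ξ) (f := fun x => d x * h x)
  have hCS : ∫ x, |d x| * |h x| ∂ξ ≤
      Real.sqrt (∫ x, d x ^ 2 ∂ξ) * Real.sqrt (∫ x, h x ^ 2 ∂ξ) :=
    my_integral_cs ξ d h hd2ξ hh2ξ hdh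
  -- ∫ d² ≤ 2 tv
  set A : Set α := {x | 0 ≤ d x} with hA
  have hAmeas : MeasurableSet A := measurableSet_le measurable_const hdmeas
  have habsd_int : ∫ x, |d x| ∂ξ =
      (∫ x in A, d x ∂ξ) + ∫ x in Aᶜ, -d x ∂ξ := by
    rw [← integral_add_compl hAmeas hdabsξ]
    congr 1
    · refine setIntegral_congr_fun hAmeas fun x hx => abs_of_nonneg hx
    · refine setIntegral_congr_fun hAmeas.compl fun x hx => ?_
      have : d x < 0 := lt_of_not_ge hx
      exact abs_of_neg this
  have hsetν : ∀ s : Set α, MeasurableSet s → ∫ x in s, (p x).toReal ∂ξ = (ν s).toReal :=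
    fun s hs => Measure.setIntegral_toReal_rnDeriv hacν s
  have hsetμ : ∀ s : Set α, MeasurableSet s → ∫ x in s, (q x).toReal ∂ξ = (μ s).toReal :=
    fun s hs => Measure.setIntegral_toReal_rnDeriv hacμ s
  have hintp' : Integrable (fun x => (p x).toReal) ξ := Measure.integrable_toReal_rnDeriv
  have hintq' : Integrable (fun x => (q x).toReal) ξ := Measure.integrable_toReal_rnDeriv
  have hsetd : ∀ s : Set α, MeasurableSet s →
      ∫ x in s, d x ∂ξ = (ν s).toReal - (μ s).toReal := by
    intro s hs
    rw [hd]
    rw [integral_sub (hintp'.restrict) (hintq'.restrict), hsetν s hs, hsetμ s hs]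
  have hcompl : ∀ (ρ : Measure α) (s : Set α), MeasurableSet s → IsProbabilityMeasure ρ →
      (ρ sᶜ).toReal = 1 - (ρ s).toReal := by
    intro ρ s hs hρ
    have := prob_compl_eq_one_sub (μ := ρ) hs
    rw [this, ENNReal.toReal_sub_of_le (prob_le_one) (by simp)]
    simp
  have habsd_val : ∫ x, |d x| ∂ξ = 2 * ((ν A).toReal - (μ A).toReal) := by
    rw [habsd_int, integral_neg, hsetd A hAmeas, hsetd Aᶜ hAmeas.compl,
      hcompl ν A hAmeas inferInstance, hcompl μ A hAmeas inferInstance]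
    ring
  have hd2_le : ∫ x, d x ^ 2 ∂ξ ≤ 2 * tvDist ν μ := by
    have h1 : ∫ x, d x ^ 2 ∂ξ ≤ ∫ x, |d x| ∂ξ := by
      refine integral_mono_ae hd2ξ hdabsξ ?_
      filter_upwards [hd1] with x hx
      have he : d x ^ 2 = |d x| * |d x| := by rw [abs_mul_abs_self, sq]
      rw [he]
      nlinarith [abs_nonneg (d x)]
    have h2 : (ν A).toReal - (μ A).toReal ≤ tvDist ν μ := my_le_tvDist ν μ hAmeas
    rw [habsd_val] at h1
    linarith
  -- ∫ h² ≤ E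
  have hh2_le : ∫ x, h x ^ 2 ∂ξ ≤ (∫ x, Q x ^ 2 ∂ν) + ∫ x, Q x ^ 2 ∂μ := by
    have : ∫ x, h x ^ 2 ∂ξ ≤ ∫ x, Q x ^ 2 ∂ξ := by
      refine integral_mono hh2ξ hQ2ξ fun x => ?_
      have := hbound x
      nlinarith [abs_nonneg (h x), sq_abs (h x), sq_abs (Q x)]
    rwa [integral_add_measure hQ2ν hQ2μ] at this
  -- combine
  have hE0 : (0:ℝ) ≤ (∫ x, Q x ^ 2 ∂ν) + ∫ x, Q x ^ 2 ∂μ := by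
    have := integral_nonneg (μ := ν) (f := fun x => Q x ^ 2) fun x => sq_nonneg _
    have := integral_nonneg (μ := μ) (f := fun x => Q x ^ 2) fun x => sq_nonneg _
    linarith
  have htv0 : (0:ℝ) ≤ tvDist ν μ := by
    have h2 : (ν A).toReal - (μ A).toReal ≤ tvDist ν μ := my_le_tvDist ν μ hAmeas
    have h1 : 0 ≤ ∫ x, d x ^ 2 ∂ξ := integral_nonneg fun x => sq_nonneg _
    have h3 := hd2_le
    linarith
  have hfinal : Real.sqrt (∫ x, d x ^ 2 ∂ξ) * Real.sqrt (∫ x, h x ^ 2 ∂ξ) ≤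
      Real.sqrt (2 * tvDist ν μ) * Real.sqrt ((∫ x, Q x ^ 2 ∂ν) + ∫ x, Q x ^ 2 ∂μ) := by
    have h01 : 0 ≤ ∫ x, d x ^ 2 ∂ξ := integral_nonneg fun x => sq_nonneg _
    have h02 : 0 ≤ ∫ x, h x ^ 2 ∂ξ := integral_nonneg fun x => sq_nonneg _
    exact mul_le_mul (Real.sqrt_le_sqrt hd2_le) (Real.sqrt_le_sqrt hh2_le)
      (Real.sqrt_nonneg _) (Real.sqrt_nonneg _)
  have hsqrt2 : Real.sqrt (2 * tvDist ν μ) ≤ 2 * Real.sqrt (tvDist ν μ) := by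
    rw [Real.sqrt_mul (by norm_num : (0:ℝ) ≤ 2)]
    have : Real.sqrt 2 ≤ 2 := by
      nlinarith [Real.sq_sqrt (by norm_num : (0:ℝ) ≤ 2), Real.sqrt_nonneg 2]
    exact mul_le_mul_of_nonneg_right this (Real.sqrt_nonneg _)
  calc |(∫ x, h x ∂ν) - ∫ x, h x ∂μ| = |∫ x, d x * h x ∂ξ| := by rw [hdiff]
  _ ≤ ∫ x, |d x| * |h x| ∂ξ := habs
  _ ≤ Real.sqrt (∫ x, d x ^ 2 ∂ξ) * Real.sqrt (∫ x, h x ^ 2 ∂ξ) := hCS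
  _ ≤ Real.sqrt (2 * tvDist ν μ) * Real.sqrt ((∫ x, Q x ^ 2 ∂ν) + ∫ x, Q x ^ 2 ∂μ) := hfinal
  _ ≤ (2 * Real.sqrt (tvDist ν μ)) * Real.sqrt ((∫ x, Q x ^ 2 ∂ν) + ∫ x, Q x ^ 2 ∂μ) := by
        exact mul_le_mul_of_nonneg_right hsqrt2 (Real.sqrt_nonneg _)
  _ = 2 * Real.sqrt ((∫ x, Q x ^ 2 ∂ν) + ∫ x, Q x ^ 2 ∂μ) * Real.sqrt (tvDist ν μ) := by ring

/-- Error bound for the mixture Taylor approximation of CVaR. Let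
`f(t) = t + (1−α)⁻¹ E_ν[(Q−t)^+]` and
`g(t) = t + (1−α)⁻¹ ∑ᵢ wᵢ E_{νᵢ}[(Q_{s,i}−t)^+]`, and suppose both minima are attained,
at `t₀` and `t₁` respectively.  Then
`|f(t₀) − g(t₁)| ≤ (1−α)⁻¹ (2 (E_ν[Q²] + E_{ν_mix}[Q²])^{1/2} tv(ν, ν_mix)^{1/2}
  + ∑ᵢ wᵢ E_{νᵢ}[|Q − Q_{s,i}|])`. -/
theorem mixture_taylor_cvar_error {α : Type*} [MeasurableSpace α]
    (a : ℝ) (ha : a ∈ Set.Ioo (0 : ℝ) 1)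
    (ν : Measure α) [IsProbabilityMeasure ν] (N : ℕ)
    (νc : Fin N → Measure α) [∀ i, IsProbabilityMeasure (νc i)]
    (w : Fin N → ℝ) (hw : ∀ i, 0 ≤ w i) (hw1 : ∑ i, w i = 1)
    (Q : α → ℝ) (Qs : Fin N → α → ℝ)
    (hQ : MemLp Q 2 ν) (hQi : ∀ i, MemLp Q 2 (νc i))
    (hQs : ∀ i, Integrable (Qs i) (νc i))
    (hdiff : ∀ i, Integrable (fun x => |Q x - Qs i x|) (νc i))
    (f g : ℝ → ℝ)
    (hf : f = fun t => t + (1 - a)⁻¹ * ∫ x, max (Q x - t) 0 ∂ν)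
    (hg : g = fun t =>
      t + (1 - a)⁻¹ * ∑ i, w i * ∫ x, max (Qs i x - t) 0 ∂(νc i))
    (t₀ t₁ : ℝ) (ht₀ : ∀ t, f t₀ ≤ f t) (ht₁ : ∀ t, g t₁ ≤ g t) :
    |f t₀ - g t₁| ≤
      (1 - a)⁻¹ *
        (2 * Real.sqrt ((∫ x, Q x ^ 2 ∂ν) + ∑ i, w i * ∫ x, Q x ^ 2 ∂(νc i)) *
            Real.sqrt (tvDist ν (∑ i, ENNReal.ofReal (w i) • νc i)) +
          ∑ i, w i * ∫ x, |Q x - Qs i x| ∂(νc i)) := by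
  have hb : (0:ℝ) < 1 - a := by linarith [ha.2]
  set μmix : Measure α := ∑ i, ENNReal.ofReal (w i) • νc i with hμmix
  haveI hmixprob : IsProbabilityMeasure μmix := by
    constructor
    rw [hμmix]
    rw [Measure.coe_finset_sum]
    simp only [Finset.sum_apply, Measure.smul_apply, smul_eq_mul, measure_univ, mul_one]
    rw [← ENNReal.ofReal_sum_of_nonneg fun i _ => hw i, hw1, ENNReal.ofReal_one]
  -- transfer facts for the mixture
  have hSint : ∀ F : α → ℝ, (∀ i, Integrable F (νc i)) → Integrable F μmix := by
    intro F hF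
    exact integrable_finset_sum_measure.2 fun i _ => (hF i).smul_measure ENNReal.ofReal_ne_top
  have hSeq : ∀ F : α → ℝ, (∀ i, Integrable F (νc i)) →
      ∫ x, F x ∂μmix = ∑ i, w i * ∫ x, F x ∂(νc i) := by
    intro F hF
    rw [hμmix, integral_finset_sum_measure fun i _ => (hF i).smul_measure ENNReal.ofReal_ne_top]
    refine Finset.sum_congr rfl fun i _ => ?_
    rw [integral_smul_measure, ENNReal.toReal_ofReal (hw i), smul_eq_mul]
  set E : ℝ := (∫ x, Q x ^ 2 ∂ν) + ∑ i, w i * ∫ x, Q x ^ 2 ∂(νc i) with hE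
  set B : ℝ := (1 - a)⁻¹ *
      (2 * Real.sqrt E * Real.sqrt (tvDist ν μmix) +
        ∑ i, w i * ∫ x, |Q x - Qs i x| ∂(νc i)) with hB
  have hQ2mix : Integrable (fun x => Q x ^ 2) μmix := hSint _ fun i => (hQi i).integrable_sq
  have hEeq : E = (∫ x, Q x ^ 2 ∂ν) + ∫ x, Q x ^ 2 ∂μmix := by
    rw [hE, hSeq _ fun i => (hQi i).integrable_sq]
  -- pointwise-in-t bound
  have key : ∀ t : ℝ, |f t - g t| ≤ B := by
    intro t
    have hposν : Integrable (fun x => max (Q x - t) 0) ν :=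
      ((hQ.integrable one_le_two).sub (integrable_const t)).pos_part
    have hposi : ∀ i, Integrable (fun x => max (Q x - t) 0) (νc i) := fun i =>
      (((hQi i).integrable one_le_two).sub (integrable_const t)).pos_part
    have hposmix : Integrable (fun x => max (Q x - t) 0) μmix := hSint _ hposi
    have hpossi : ∀ i, Integrable (fun x => max (Qs i x - t) 0) (νc i) := fun i =>
      ((hQs i).sub (integrable_const t)).pos_part
    -- difference of f and g at t
    have hft : f t - g t = (1 - a)⁻¹ *
        ((∫ x, max (Q x - t) 0 ∂ν) - ∑ i, w i * ∫ x, max (Qs i x - t) 0 ∂(νc i)) := by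
      rw [hf, hg]
      ring
    set Δ : ℝ := (∫ x, max (Q x - t) 0 ∂ν) - ∑ i, w i * ∫ x, max (Qs i x - t) 0 ∂(νc i) with hΔ
    -- first piece : TV bound
    set h : α → ℝ := fun x => max (Q x - t) 0 - max (-t) 0 with hh
    have hhbound : ∀ x, |h x| ≤ |Q x| := by
      intro x
      have := abs_max_sub_max_le_abs (Q x - t) (-t) 0
      simpa using this
    have hhν : Integrable h ν := hposν.sub (integrable_const _)
    have hhmix : Integrable h μmix := hposmix.sub (integrable_const _)
    have hTV : |(∫ x, max (Q x - t) 0 ∂ν) - ∫ x, max (Q x - t) 0 ∂μmix| ≤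
        2 * Real.sqrt E * Real.sqrt (tvDist ν μmix) := by
      have hcore := my_tv_core ν μmix Q h hQ.integrable_sq hQ2mix hhν hhmix hhbound
      have e1 : ∫ x, h x ∂ν = (∫ x, max (Q x - t) 0 ∂ν) - max (-t) 0 := by
        rw [hh, integral_sub hposν (integrable_const _), integral_const]
        simp
      have e2 : ∫ x, h x ∂μmix = (∫ x, max (Q x - t) 0 ∂μmix) - max (-t) 0 := by
        rw [hh, integral_sub hposmix (integrable_const _), integral_const]
        simp
      rw [e1, e2] at hcore
      rw [hEeq]
      convert hcore using 2
      ring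
    -- second piece : approximation bound
    have happrox : ∀ i, |(∫ x, max (Q x - t) 0 ∂(νc i)) - ∫ x, max (Qs i x - t) 0 ∂(νc i)| ≤
        ∫ x, |Q x - Qs i x| ∂(νc i) := by
      intro i
      rw [← integral_sub (hposi i) (hpossi i)]
      calc |∫ x, (max (Q x - t) 0 - max (Qs i x - t) 0) ∂(νc i)|
          ≤ ∫ x, |max (Q x - t) 0 - max (Qs i x - t) 0| ∂(νc i) := by
            simpa [Real.norm_eq_abs] using norm_integral_le_integral_norm (μ := νc i)
              (f := fun x => max (Q x - t) 0 - max (Qs i x - t) 0)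
      _ ≤ ∫ x, |Q x - Qs i x| ∂(νc i) := by
            refine integral_mono ((hposi i).sub (hpossi i)).abs (hdiff i) fun x => ?_
            have := abs_max_sub_max_le_abs (Q x - t) (Qs i x - t) 0
            simpa using this
    -- combine
    have hΔbound : |Δ| ≤ 2 * Real.sqrt E * Real.sqrt (tvDist ν μmix) +
        ∑ i, w i * ∫ x, |Q x - Qs i x| ∂(νc i) := by
      have hmixint : ∫ x, max (Q x - t) 0 ∂μmix = ∑ i, w i * ∫ x, max (Q x - t) 0 ∂(νc i) :=
        hSeq _ hposi
      have hsplit : Δ = ((∫ x, max (Q x - t) 0 ∂ν) - ∫ x, max (Q x - t) 0 ∂μmix) +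
          ∑ i, w i * ((∫ x, max (Q x - t) 0 ∂(νc i)) - ∫ x, max (Qs i x - t) 0 ∂(νc i)) := by
        rw [hΔ, hmixint]
        simp only [mul_sub, Finset.sum_sub_distrib]
        ring
      rw [hsplit]
      refine (abs_add_le _ _).trans (add_le_add hTV ?_)
      calc |∑ i, w i * ((∫ x, max (Q x - t) 0 ∂(νc i)) - ∫ x, max (Qs i x - t) 0 ∂(νc i))|
          ≤ ∑ i, |w i * ((∫ x, max (Q x - t) 0 ∂(νc i)) - ∫ x, max (Qs i x - t) 0 ∂(νc i))| :=
            Finset.abs_sum_le_sum_abs _ _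
      _ ≤ ∑ i, w i * ∫ x, |Q x - Qs i x| ∂(νc i) := by
            refine Finset.sum_le_sum fun i _ => ?_
            rw [abs_mul, abs_of_nonneg (hw i)]
            exact mul_le_mul_of_nonneg_left (happrox i) (hw i)
    -- finish
    rw [hft, abs_mul, abs_of_nonneg (le_of_lt (inv_pos.2 hb)), hB]
    exact mul_le_mul_of_nonneg_left hΔbound (le_of_lt (inv_pos.2 hb))
  -- conclude from the two minima
  have h1 : f t₀ - g t₁ ≤ B := by
    have hk := abs_le.1 (key t₁)
    linarith [hk.2, ht₀ t₁]
  have h2 : g t₁ - f t₀ ≤ B := by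
    have hk := abs_le.1 (key t₀)
    linarith [hk.1, ht₁ t₀]
  have : |f t₀ - g t₁| ≤ B := abs_le.2 ⟨by linarith, by linarith⟩
  exact this
end

section
/- Let ν and μ be probability measures on a measurable space and let Q be a measurable real-valued function with finite second moments under both ν and μ. Then for every t ∈ ℝ, |E_ν[(Q − t)^+] − E_μ[(Q − t)^+]| ≤ 2 (E_ν[Q²] + E_μ[Q²])^{1/2} · tv(ν, μ)^{1/2}, where (x)^+ = max(x, 0). In particular, the bound is uniform in t. -/
open MeasureTheory
open scoped NNReal ENNReal

lemma tvDist_ge {α : Type*} [MeasurableSpace α] (ν μ : Measure α)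
    [IsProbabilityMeasure ν] [IsProbabilityMeasure μ] {s : Set α} (hs : MeasurableSet s) :
    |(ν s).toReal - (μ s).toReal| ≤ tvDist ν μ := by
  have hb : BddAbove (Set.range fun s : {s : Set α // MeasurableSet s} =>
      |(ν s.1).toReal - (μ s.1).toReal|) := by
    refine ⟨1, ?_⟩
    rintro x ⟨s, rfl⟩
    have h1 : (ν s.1).toReal ≤ 1 := by
      have := ENNReal.toReal_mono (by simp) (measure_mono (Set.subset_univ s.1) : ν s.1 ≤ ν Set.univ)
      simpa using this
    have h2 : (μ s.1).toReal ≤ 1 := by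
      have := ENNReal.toReal_mono (by simp) (measure_mono (Set.subset_univ s.1) : μ s.1 ≤ μ Set.univ)
      simpa using this
    have h3 : (0:ℝ) ≤ (ν s.1).toReal := ENNReal.toReal_nonneg
    have h4 : (0:ℝ) ≤ (μ s.1).toReal := ENNReal.toReal_nonneg
    rw [abs_sub_le_iff]
    constructor <;> linarith
  exact le_ciSup hb (⟨s, hs⟩ : {s : Set α // MeasurableSet s})

lemma tvDist_nonneg {α : Type*} [MeasurableSpace α] (ν μ : Measure α)
    [IsProbabilityMeasure ν] [IsProbabilityMeasure μ] : 0 ≤ tvDist ν μ :=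
  le_trans (abs_nonneg _) (tvDist_ge ν μ MeasurableSet.empty)

lemma key_tv_bound {α : Type*} [MeasurableSpace α] (ν μ : Measure α)
    [IsProbabilityMeasure ν] [IsProbabilityMeasure μ]
    (Q f : α → ℝ) (hQν : MemLp Q 2 ν) (hQμ : MemLp Q 2 μ)
    (hfν : AEStronglyMeasurable f ν) (hfμ : AEStronglyMeasurable f μ)
    (hle : ∀ x, |f x| ≤ |Q x|) :
    |(∫ x, f x ∂ν) - ∫ x, f x ∂μ| ≤
      2 * Real.sqrt ((∫ x, Q x ^ 2 ∂ν) + ∫ x, Q x ^ 2 ∂μ) * Real.sqrt (tvDist ν μ) := by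
  have hνl : ν ≪ ν + μ := Measure.absolutelyContinuous_of_le (Measure.le_add_right le_rfl)
  have hμl : μ ≪ ν + μ := Measure.absolutelyContinuous_of_le (Measure.le_add_left le_rfl)
  set lam : Measure α := ν + μ with hlam
  set gν : α → ℝ≥0∞ := ν.rnDeriv lam with hgν_def
  set gμ : α → ℝ≥0∞ := μ.rnDeriv lam with hgμ_def
  set d : α → ℝ := fun x => (gν x).toReal - (gμ x).toReal with hd_def
  have hd_meas : Measurable d :=
    ((Measure.measurable_rnDeriv ν lam).ennreal_toReal).sub
      ((Measure.measurable_rnDeriv μ lam).ennreal_toReal)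
  -- MemLp of f
  have hboundν : ∀ᵐ x ∂ν, ‖f x‖ ≤ ‖Q x‖ :=
    Filter.Eventually.of_forall fun x => by simpa [Real.norm_eq_abs] using hle x
  have hboundμ : ∀ᵐ x ∂μ, ‖f x‖ ≤ ‖Q x‖ :=
    Filter.Eventually.of_forall fun x => by simpa [Real.norm_eq_abs] using hle x
  have hfν2 : MemLp f 2 ν := hQν.of_le hfν hboundν
  have hfμ2 : MemLp f 2 μ := hQμ.of_le hfμ hboundμ
  have hfl : AEStronglyMeasurable f lam := hfν.add_measure hfμ
  have hfν1 : Integrable f ν := hfν2.integrable (by norm_num)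
  have hfμ1 : Integrable f μ := hfμ2.integrable (by norm_num)
  -- rewrite the difference as an integral against lam
  have hintν : Integrable (fun x => (gν x).toReal • f x) lam :=
    (integrable_rnDeriv_smul_iff hνl).mpr hfν1
  have hintμ : Integrable (fun x => (gμ x).toReal • f x) lam :=
    (integrable_rnDeriv_smul_iff hμl).mpr hfμ1
  have hdiff : (∫ x, f x ∂ν) - ∫ x, f x ∂μ = ∫ x, d x * f x ∂lam := by
    rw [← integral_rnDeriv_smul hνl (f := f), ← integral_rnDeriv_smul hμl (f := f),
      ← integral_sub hintν hintμ]
    refine integral_congr_ae (Filter.Eventually.of_forall fun x => ?_)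
    simp only [hd_def, smul_eq_mul, sub_mul]
  -- |d| ≤ 1 a.e. [lam]
  have hsum : ∀ᵐ x ∂lam, gν x + gμ x = 1 := by
    have h1 := Measure.rnDeriv_add ν μ lam
    have h2 := Measure.rnDeriv_self lam
    filter_upwards [h1, h2] with x hx1 hx2
    have : (ν + μ).rnDeriv lam x = 1 := hx2
    rw [hx1] at this
    simpa [hgν_def, hgμ_def] using this
  have hfinν := Measure.rnDeriv_lt_top ν lam
  have hfinμ := Measure.rnDeriv_lt_top μ lam
  have hd_le : ∀ᵐ x ∂lam, |d x| ≤ 1 := by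
    filter_upwards [hsum, hfinν, hfinμ] with x h1 h2 h3
    have hadd : (gν x).toReal + (gμ x).toReal = 1 := by
      rw [← ENNReal.toReal_add h2.ne h3.ne, h1]
      simp
    have h5 : (0:ℝ) ≤ (gν x).toReal := ENNReal.toReal_nonneg
    have h6 : (0:ℝ) ≤ (gμ x).toReal := ENNReal.toReal_nonneg
    rw [hd_def, abs_sub_le_iff]
    constructor <;> linarith
  have hgνint : Integrable (fun x => (gν x).toReal) lam := Measure.integrable_toReal_rnDeriv
  have hgμint : Integrable (fun x => (gμ x).toReal) lam := Measure.integrable_toReal_rnDeriv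
  have hdint : Integrable d lam := hgνint.sub hgμint
  -- ∫ |d| ≤ 2 * tv
  set A : Set α := {x | 0 ≤ d x} with hA_def
  have hA : MeasurableSet A := measurableSet_le measurable_const hd_meas
  have hsplit : ∫ x, |d x| ∂lam = (∫ x in A, |d x| ∂lam) + ∫ x in Aᶜ, |d x| ∂lam :=
    (integral_add_compl hA hdint.abs).symm
  have hAint : ∫ x in A, |d x| ∂lam = (ν A).toReal - (μ A).toReal := by
    rw [setIntegral_congr_fun hA (fun x hx => abs_of_nonneg hx)]
    rw [show d = fun x => (gν x).toReal - (gμ x).toReal from rfl]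
    rw [integral_sub hgνint.restrict hgμint.restrict,
      Measure.setIntegral_toReal_rnDeriv hνl A, Measure.setIntegral_toReal_rnDeriv hμl A]
    rfl
  have hAcint : ∫ x in Aᶜ, |d x| ∂lam = (μ Aᶜ).toReal - (ν Aᶜ).toReal := by
    have heq : ∀ x ∈ Aᶜ, |d x| = (gμ x).toReal - (gν x).toReal := by
      intro x hx
      have hdx : d x < 0 := not_le.mp hx
      rw [abs_of_neg hdx, hd_def]
      ring
    rw [setIntegral_congr_fun hA.compl heq,
      integral_sub hgμint.restrict hgνint.restrict,
      Measure.setIntegral_toReal_rnDeriv hμl Aᶜ, Measure.setIntegral_toReal_rnDeriv hνl Aᶜ]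
    rfl
  have hdabs_le : ∫ x, |d x| ∂lam ≤ 2 * tvDist ν μ := by
    rw [hsplit, hAint, hAcint]
    have h1 := tvDist_ge ν μ hA
    have h2 := tvDist_ge ν μ hA.compl
    have h3 := le_abs_self ((ν A).toReal - (μ A).toReal)
    have h4 := neg_abs_le ((ν Aᶜ).toReal - (μ Aᶜ).toReal)
    linarith
  -- ∫ d^2 ≤ ∫ |d|
  have hd_l2 : MemLp d 2 lam :=
    MemLp.of_bound hd_meas.aestronglyMeasurable 1
      (by filter_upwards [hd_le] with x hx; simpa [Real.norm_eq_abs] using hx)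
  have hd2int : Integrable (fun x => d x ^ 2) lam := hd_l2.integrable_sq
  have hd2_le : ∫ x, d x ^ 2 ∂lam ≤ ∫ x, |d x| ∂lam := by
    refine integral_mono_ae hd2int hdint.abs ?_
    filter_upwards [hd_le] with x hx
    have h0 := abs_nonneg (d x)
    have : d x ^ 2 = |d x| ^ 2 := (sq_abs (d x)).symm
    nlinarith
  -- MemLp over lam
  have hQl : MemLp Q 2 lam :=
    (memLp_two_iff_integrable_sq (hQν.1.add_measure hQμ.1)).mpr
      ((hQν.integrable_sq).add_measure (hQμ.integrable_sq))
  have hf_l2 : MemLp f 2 lam := hQl.of_le hfl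
    (Filter.Eventually.of_forall fun x => by simpa [Real.norm_eq_abs] using hle x)
  -- Cauchy–Schwarz
  have hpq : Real.HolderConjugate 2 2 := Real.HolderConjugate.two_two
  have hfabs : MemLp (fun x => |f x|) (ENNReal.ofReal 2) lam := by
    have := hf_l2.norm
    simpa [Real.norm_eq_abs, ENNReal.ofReal_ofNat] using this
  have hdabs2 : MemLp (fun x => |d x|) (ENNReal.ofReal 2) lam := by
    have := hd_l2.norm
    simpa [Real.norm_eq_abs, ENNReal.ofReal_ofNat] using this
  have hCS := integral_mul_le_Lp_mul_Lq_of_nonneg hpq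
    (Filter.Eventually.of_forall fun x => abs_nonneg (f x))
    (Filter.Eventually.of_forall fun x => abs_nonneg (d x)) hfabs hdabs2
  -- convert rpow to pow
  have hrpow : ∀ y : ℝ, y ^ (2:ℝ) = y ^ (2:ℕ) := fun y => by
    rw [show (2:ℝ) = ((2:ℕ):ℝ) by norm_num, Real.rpow_natCast]
  have hInt1 : ∫ x, |f x| ^ (2:ℝ) ∂lam = ∫ x, f x ^ 2 ∂lam := by
    refine integral_congr_ae (Filter.Eventually.of_forall fun x => ?_)
    show |f x| ^ (2:ℝ) = f x ^ 2
    rw [hrpow]; exact sq_abs (f x)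
  have hInt2 : ∫ x, |d x| ^ (2:ℝ) ∂lam = ∫ x, d x ^ 2 ∂lam := by
    refine integral_congr_ae (Filter.Eventually.of_forall fun x => ?_)
    show |d x| ^ (2:ℝ) = d x ^ 2
    rw [hrpow]; exact sq_abs (d x)
  rw [hInt1, hInt2] at hCS
  -- |∫ d f| ≤ ∫ |f| |d|
  have habs : |∫ x, d x * f x ∂lam| ≤ ∫ x, |f x| * |d x| ∂lam := by
    calc |∫ x, d x * f x ∂lam| ≤ ∫ x, ‖d x * f x‖ ∂lam := by
          simpa [Real.norm_eq_abs] using norm_integral_le_integral_norm (fun x => d x * f x) (μ := lam)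
      _ = ∫ x, |f x| * |d x| ∂lam := by
          refine integral_congr_ae (Filter.Eventually.of_forall fun x => ?_)
          simp [Real.norm_eq_abs, abs_mul, mul_comm]
  -- bounds on the two factors
  have hSnn : (0:ℝ) ≤ (∫ x, Q x ^ 2 ∂ν) + ∫ x, Q x ^ 2 ∂μ := by
    have h1 : (0:ℝ) ≤ ∫ x, Q x ^ 2 ∂ν := integral_nonneg fun x => sq_nonneg _
    have h2 : (0:ℝ) ≤ ∫ x, Q x ^ 2 ∂μ := integral_nonneg fun x => sq_nonneg _
    linarith
  have hf2_le : ∫ x, f x ^ 2 ∂lam ≤ (∫ x, Q x ^ 2 ∂ν) + ∫ x, Q x ^ 2 ∂μ := by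
    have hmono : ∫ x, f x ^ 2 ∂lam ≤ ∫ x, Q x ^ 2 ∂lam := by
      refine integral_mono hf_l2.integrable_sq hQl.integrable_sq fun x => ?_
      have := pow_le_pow_left₀ (abs_nonneg (f x)) (hle x) 2
      simpa [sq_abs] using this
    have hadd : ∫ x, Q x ^ 2 ∂lam = (∫ x, Q x ^ 2 ∂ν) + ∫ x, Q x ^ 2 ∂μ :=
      integral_add_measure hQν.integrable_sq hQμ.integrable_sq
    linarith
  have hd2_le' : ∫ x, d x ^ 2 ∂lam ≤ 2 * tvDist ν μ := le_trans hd2_le hdabs_le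
  have hf2nn : (0:ℝ) ≤ ∫ x, f x ^ 2 ∂lam := integral_nonneg fun x => sq_nonneg _
  have hd2nn : (0:ℝ) ≤ ∫ x, d x ^ 2 ∂lam := integral_nonneg fun x => sq_nonneg _
  have hsq1 : (∫ x, f x ^ 2 ∂lam) ^ (1/(2:ℝ)) = Real.sqrt (∫ x, f x ^ 2 ∂lam) :=
    (Real.sqrt_eq_rpow _).symm
  have hsq2 : (∫ x, d x ^ 2 ∂lam) ^ (1/(2:ℝ)) = Real.sqrt (∫ x, d x ^ 2 ∂lam) :=
    (Real.sqrt_eq_rpow _).symm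
  rw [hsq1, hsq2] at hCS
  have hfinal1 : Real.sqrt (∫ x, f x ^ 2 ∂lam) ≤
      Real.sqrt ((∫ x, Q x ^ 2 ∂ν) + ∫ x, Q x ^ 2 ∂μ) := Real.sqrt_le_sqrt hf2_le
  have hfinal2 : Real.sqrt (∫ x, d x ^ 2 ∂lam) ≤ Real.sqrt 2 * Real.sqrt (tvDist ν μ) := by
    rw [← Real.sqrt_mul (by norm_num : (0:ℝ) ≤ 2)]
    exact Real.sqrt_le_sqrt hd2_le'
  have hsqrt2 : Real.sqrt 2 ≤ 2 := by
    nlinarith [Real.sq_sqrt (by norm_num : (0:ℝ) ≤ 2), Real.sqrt_nonneg 2]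
  calc |(∫ x, f x ∂ν) - ∫ x, f x ∂μ| = |∫ x, d x * f x ∂lam| := by rw [hdiff]
    _ ≤ ∫ x, |f x| * |d x| ∂lam := habs
    _ ≤ Real.sqrt (∫ x, f x ^ 2 ∂lam) * Real.sqrt (∫ x, d x ^ 2 ∂lam) := hCS
    _ ≤ Real.sqrt ((∫ x, Q x ^ 2 ∂ν) + ∫ x, Q x ^ 2 ∂μ) *
        (Real.sqrt 2 * Real.sqrt (tvDist ν μ)) := by
        exact mul_le_mul hfinal1 hfinal2 (Real.sqrt_nonneg _) (Real.sqrt_nonneg _)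
    _ ≤ Real.sqrt ((∫ x, Q x ^ 2 ∂ν) + ∫ x, Q x ^ 2 ∂μ) * (2 * Real.sqrt (tvDist ν μ)) := by
        refine mul_le_mul_of_nonneg_left ?_ (Real.sqrt_nonneg _)
        exact mul_le_mul_of_nonneg_right hsqrt2 (Real.sqrt_nonneg _)
    _ = 2 * Real.sqrt ((∫ x, Q x ^ 2 ∂ν) + ∫ x, Q x ^ 2 ∂μ) * Real.sqrt (tvDist ν μ) := by ring

/-- Uniform-in-`t` total variation bound for expectations of `(Q − t)^+`: for probability
measures `ν, μ` and `Q` with finite second moments under both,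
`|E_ν[(Q−t)^+] − E_μ[(Q−t)^+]| ≤ 2 (E_ν[Q²] + E_μ[Q²])^{1/2} tv(ν, μ)^{1/2}` for all `t`. -/
theorem ramp_expectation_tv_bound {α : Type*} [MeasurableSpace α]
    (ν μ : Measure α) [IsProbabilityMeasure ν] [IsProbabilityMeasure μ]
    (Q : α → ℝ) (hQν : MemLp Q 2 ν) (hQμ : MemLp Q 2 μ) :
    ∀ t : ℝ,
      |(∫ x, max (Q x - t) 0 ∂ν) - ∫ x, max (Q x - t) 0 ∂μ| ≤
        2 * Real.sqrt ((∫ x, Q x ^ 2 ∂ν) + ∫ x, Q x ^ 2 ∂μ) * Real.sqrt (tvDist ν μ) := by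
  intro t
  rcases le_or_gt 0 t with ht | ht
  · -- t ≥ 0 : |(Q−t)^+| ≤ |Q|
    refine key_tv_bound ν μ Q (fun x => max (Q x - t) 0) hQν hQμ
      ((hQν.1.sub aestronglyMeasurable_const).sup aestronglyMeasurable_const)
      ((hQμ.1.sub aestronglyMeasurable_const).sup aestronglyMeasurable_const)
      (fun x => ?_)
    rw [abs_of_nonneg (le_max_right _ _)]
    exact max_le (by linarith [le_abs_self (Q x)]) (abs_nonneg _)
  · -- t < 0 : shift by t
    have hmax : ∀ x, max (Q x - t) 0 = max (Q x) t - t := fun x => by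
      have := max_sub_sub_right (Q x) t t
      simpa using this
    have hb : ∀ x, |max (Q x) t| ≤ |Q x| := fun x => by
      rcases le_total t (Q x) with h | h
      · rw [max_eq_left h]
      · have hq : Q x < 0 := lt_of_le_of_lt h ht
        rw [max_eq_right h, abs_of_neg ht, abs_of_neg hq]
        linarith
    have hsmν : AEStronglyMeasurable (fun x => max (Q x) t) ν :=
      hQν.1.sup aestronglyMeasurable_const
    have hsmμ : AEStronglyMeasurable (fun x => max (Q x) t) μ :=
      hQμ.1.sup aestronglyMeasurable_const
    have hgν : Integrable (fun x => max (Q x) t) ν :=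
      ((hQν.of_le hsmν (Filter.Eventually.of_forall fun x => by
        simpa [Real.norm_eq_abs] using hb x)).integrable (by norm_num))
    have hgμ : Integrable (fun x => max (Q x) t) μ :=
      ((hQμ.of_le hsmμ (Filter.Eventually.of_forall fun x => by
        simpa [Real.norm_eq_abs] using hb x)).integrable (by norm_num))
    have hIν : ∫ x, max (Q x - t) 0 ∂ν = (∫ x, max (Q x) t ∂ν) - t := by
      simp_rw [hmax]
      rw [integral_sub hgν (integrable_const t), integral_const]
      simp
    have hIμ : ∫ x, max (Q x - t) 0 ∂μ = (∫ x, max (Q x) t ∂μ) - t := by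
      simp_rw [hmax]
      rw [integral_sub hgμ (integrable_const t), integral_const]
      simp
    rw [hIν, hIμ]
    have : (∫ x, max (Q x) t ∂ν) - t - ((∫ x, max (Q x) t ∂μ) - t)
        = (∫ x, max (Q x) t ∂ν) - ∫ x, max (Q x) t ∂μ := by ring
    rw [this]
    exact key_tv_bound ν μ Q (fun x => max (Q x) t) hQν hQμ hsmν hsmμ hb
end
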